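/- Let n be an odd positive integer and let σ = (σ_1,…,σ_n) be a left-handed Clifford family of size n acting on ℂ^N with N = 2^{(n−1)/2}. For a vector q ∈ ℝ^n write σ·q = Σ_{i=1}^n q_i σ_i. Then for any column vectors q_1,…,q_n ∈ ℝ^n one has Tr((σ·q_1)(σ·q_2)⋯(σ·q_n)) = 2^{(n−1)/2} · i^{(n−1)/2} · det(q_1,…,q_n), where det(q_1,…,q_n) is the determinant of the n×n real matrix whose k-th column is q_k. -/

import Mathlib

open Matrix

namespace CliffordAux

variable {n N : ℕ} (σ : Fin n → Matrix (Fin N) (Fin N) ℂ)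

lemma sq_one (hσac : ∀ i j, σ i * σ j + σ j * σ i =
      if i = j then (2 : ℂ) • (1 : Matrix (Fin N) (Fin N) ℂ) else 0) (i : Fin n) :
    σ i * σ i = 1 := by
  have h := hσac i i
  simp only [if_pos rfl] at h
  have h2 : (2:ℂ) • (σ i * σ i) = (2:ℂ) • (1 : Matrix (Fin N) (Fin N) ℂ) := by
    rw [two_smul]; exact h
  exact smul_right_injective _ (by norm_num) h2

lemma anti (hσac : ∀ i j, σ i * σ j + σ j * σ i =
      if i = j then (2 : ℂ) • (1 : Matrix (Fin N) (Fin N) ℂ) else 0)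
    {i j : Fin n} (hij : i ≠ j) : σ i * σ j = -(σ j * σ i) := by
  have h := hσac i j
  rw [if_neg hij] at h
  exact eq_neg_of_add_eq_zero_left h


lemma comm_word (hsq : ∀ i, σ i * σ i = 1)
    (hanti : ∀ i j : Fin n, i ≠ j → σ i * σ j = -(σ j * σ i)) :
    ∀ (l : List (Fin n)) (a : Fin n),
      σ a * (l.map σ).prod =
        ((-1 : ℂ) ^ (l.countP (fun b => decide (b ≠ a)))) • ((l.map σ).prod * σ a)
  | [], a => by simp
  | b :: t, a => by
    have ih := comm_word hsq hanti t a
    simp only [List.map_cons, List.prod_cons, List.countP_cons]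
    by_cases hba : b = a
    · subst hba
      rw [if_neg (by simp)]
      calc σ b * (σ b * (t.map σ).prod)
          = σ b * (((-1:ℂ) ^ (t.countP (fun x => decide (x ≠ b)))) • ((t.map σ).prod * σ b)) := by
            rw [ih]
        _ = ((-1:ℂ) ^ (t.countP (fun x => decide (x ≠ b)))) • (σ b * (t.map σ).prod * σ b) := by
            rw [mul_smul_comm, mul_assoc]
    · have hab : a ≠ b := fun h => hba h.symm
      rw [if_pos (by simpa using hba)]
      calc σ a * (σ b * (t.map σ).prod)
          = (σ a * σ b) * (t.map σ).prod := by rw [mul_assoc]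
        _ = -(σ b * (σ a * (t.map σ).prod)) := by rw [hanti a b hab]; rw [neg_mul, mul_assoc]
        _ = -(σ b * (((-1:ℂ) ^ (t.countP (fun x => decide (x ≠ a)))) • ((t.map σ).prod * σ a))) := by
            rw [ih]
        _ = ((-1:ℂ) ^ (t.countP (fun x => decide (x ≠ a)) + 1)) • (σ b * (t.map σ).prod * σ a) := by
            rw [mul_smul_comm, pow_succ, mul_smul, ← mul_assoc]
            simp

lemma trace_zero_of_odd_countP (hsq : ∀ i, σ i * σ i = 1)
    (hanti : ∀ i j : Fin n, i ≠ j → σ i * σ j = -(σ j * σ i))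
    (l : List (Fin n)) (a : Fin n)
    (h : Odd (l.countP (fun b => decide (b ≠ a)))) :
    Matrix.trace ((l.map σ).prod) = 0 := by
  have h1 := comm_word σ hsq hanti l a
  rw [Odd.neg_one_pow h] at h1
  set P := (l.map σ).prod with hP
  have h2 : Matrix.trace P = - Matrix.trace P := by
    calc Matrix.trace P = Matrix.trace ((P * σ a) * σ a) := by
          rw [mul_assoc, hsq, mul_one]
      _ = Matrix.trace (σ a * (P * σ a)) := (trace_mul_comm _ _).symm
      _ = Matrix.trace ((σ a * P) * σ a) := by rw [mul_assoc]
      _ = Matrix.trace ((((-1:ℂ)) • (P * σ a)) * σ a) := by rw [h1]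
      _ = - Matrix.trace P := by
          rw [smul_mul_assoc, mul_assoc, hsq, mul_one]
          simp
  linear_combination h2 / 2


lemma trace_nodup_zero (hsq : ∀ i, σ i * σ i = 1)
    (hanti : ∀ i j : Fin n, i ≠ j → σ i * σ j = -(σ j * σ i))
    (l : List (Fin n)) (hnd : l.Nodup) (hne : l ≠ []) (hlen : l.length < n) :
    Matrix.trace ((l.map σ).prod) = 0 := by
  rcases Nat.even_or_odd l.length with he | ho
  · obtain ⟨a, t, rfl⟩ : ∃ a t, l = a :: t := by
      cases l with
      | nil => exact absurd rfl hne
      | cons a t => exact ⟨a, t, rfl⟩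
    have hat : a ∉ t := (List.nodup_cons.mp hnd).1
    apply trace_zero_of_odd_countP σ hsq hanti _ a
    have hcount : (a :: t).countP (fun b => decide (b ≠ a)) = t.length := by
      rw [List.countP_cons]
      simp only [ne_eq, not_true_eq_false, decide_not, decide_eq_true_eq]
      rw [if_neg (by simp)]
      rw [add_zero]
      exact List.countP_eq_length.mpr (fun b hb => by
        simp only [decide_eq_true_eq, ne_eq, decide_not, Bool.not_eq_true']
        simp only [decide_eq_false_iff_not]
        rintro rfl; exact hat hb)
    rw [hcount]
    simp only [List.length_cons] at he
    rcases Nat.even_add_one.mp he with h'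
    exact Nat.odd_iff.mpr (by have := Nat.even_iff.not.mp h'; omega)
  · have hne_univ : l.toFinset ≠ Finset.univ := by
      intro h
      have hc := congrArg Finset.card h
      rw [List.toFinset_card_of_nodup hnd, Finset.card_univ, Fintype.card_fin] at hc
      omega
    obtain ⟨a, ha⟩ : ∃ a, a ∉ l.toFinset := by
      by_contra hcon; push_neg at hcon
      exact hne_univ (Finset.eq_univ_iff_forall.mpr hcon)
    apply trace_zero_of_odd_countP σ hsq hanti l a
    have hcount : l.countP (fun b => decide (b ≠ a)) = l.length :=
      List.countP_eq_length.mpr (fun b hb => by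
        simp only [decide_eq_true_eq, ne_eq]
        rintro rfl; exact ha (List.mem_toFinset.mpr hb))
    rw [hcount]; exact ho


lemma exists_dup_decomp {α : Type*} : ∀ (l : List α), ¬ l.Nodup →
    ∃ (a : α) (l1 l2 l3 : List α), l = l1 ++ a :: (l2 ++ a :: l3)
  | [], h => absurd List.nodup_nil h
  | b :: t, h => by
    by_cases hb : b ∈ t
    · obtain ⟨s, u, rfl⟩ := List.append_of_mem hb
      exact ⟨b, [], s, u, rfl⟩
    · have ht : ¬ t.Nodup := fun hnd => h (List.nodup_cons.mpr ⟨hb, hnd⟩)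
      obtain ⟨a, l1, l2, l3, hdec⟩ := exists_dup_decomp t ht
      exact ⟨a, b :: l1, l2, l3, by rw [hdec]; rfl⟩

lemma trace_short (hsq : ∀ i, σ i * σ i = 1)
    (hanti : ∀ i j : Fin n, i ≠ j → σ i * σ j = -(σ j * σ i)) :
    ∀ (fuel : ℕ) (l : List (Fin n)), l.length ≤ fuel → Odd l.length → l.length ≤ n →
      (¬ l.Nodup ∨ l.length < n) → Matrix.trace ((l.map σ).prod) = 0
  | 0, l, hf, ho, _, _ => by
    rw [Nat.le_zero.mp hf] at ho
    exact absurd ho (by simp)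
  | fuel + 1, l, hf, ho, hln, hor => by
    by_cases hnd : l.Nodup
    · have hlt : l.length < n := hor.resolve_left (fun h => h hnd)
      have hne : l ≠ [] := by
        rintro rfl; exact absurd ho (by simp)
      exact trace_nodup_zero σ hsq hanti l hnd hne hlt
    · obtain ⟨a, l1, l2, l3, rfl⟩ := exists_dup_decomp _ hnd
      have key : Matrix.trace (((l1 ++ a :: (l2 ++ a :: l3)).map σ).prod)
          = ((-1:ℂ) ^ (l2.countP (fun b => decide (b ≠ a)))) *
            Matrix.trace (((l1 ++ (l2 ++ l3)).map σ).prod) := by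
        simp only [List.map_append, List.map_cons, List.prod_append, List.prod_cons]
        have inner : σ a * ((l2.map σ).prod * (σ a * (l3.map σ).prod))
            = ((-1:ℂ) ^ (l2.countP (fun b => decide (b ≠ a)))) •
              ((l2.map σ).prod * (l3.map σ).prod) := by
          rw [← mul_assoc, comm_word σ hsq hanti l2 a, smul_mul_assoc, mul_assoc,
            ← mul_assoc (σ a), hsq, one_mul]
        rw [inner, mul_smul_comm, Matrix.trace_smul, smul_eq_mul]
      rw [key]
      have hlen2 : (l1 ++ (l2 ++ l3)).length + 2 = (l1 ++ a :: (l2 ++ a :: l3)).length := by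
        simp; omega
      have hrec := trace_short hsq hanti fuel (l1 ++ (l2 ++ l3))
        (by omega) (by rw [Nat.odd_iff] at ho ⊢; omega) (by omega) (Or.inr (by omega))
      rw [hrec, mul_zero]


lemma swap_word (hsq : ∀ i, σ i * σ i = 1)
    (hanti : ∀ i j : Fin n, i ≠ j → σ i * σ j = -(σ j * σ i))
    (l1 l2 l3 : List (Fin n)) (a b : Fin n) (hab : a ≠ b) (ha : a ∉ l2) (hb : b ∉ l2) :
    ((l1 ++ a :: (l2 ++ b :: l3)).map σ).prod = - ((l1 ++ b :: (l2 ++ a :: l3)).map σ).prod := by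
  have hca : l2.countP (fun x => decide (x ≠ a)) = l2.length :=
    List.countP_eq_length.mpr (fun x hx => by
      simp only [decide_eq_true_eq, ne_eq]; rintro rfl; exact ha hx)
  have hcb : l2.countP (fun x => decide (x ≠ b)) = l2.length :=
    List.countP_eq_length.mpr (fun x hx => by
      simp only [decide_eq_true_eq, ne_eq]; rintro rfl; exact hb hx)
  simp only [List.map_append, List.map_cons, List.prod_append, List.prod_cons]
  set P2 := (l2.map σ).prod
  set P3 := (l3.map σ).prod
  have claim : σ a * (P2 * (σ b * P3)) = -(σ b * (P2 * (σ a * P3))) := by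
    have hL : σ a * (P2 * (σ b * P3))
        = ((-1:ℂ) ^ l2.length) • (P2 * ((σ a * σ b) * P3)) := by
      rw [← mul_assoc, comm_word σ hsq hanti l2 a, hca, smul_mul_assoc, mul_assoc, ← mul_assoc (σ a)]
    have hR : σ b * (P2 * (σ a * P3))
        = ((-1:ℂ) ^ l2.length) • (P2 * ((σ b * σ a) * P3)) := by
      rw [← mul_assoc, comm_word σ hsq hanti l2 b, hcb, smul_mul_assoc, mul_assoc, ← mul_assoc (σ b)]
    rw [hL, hR, hanti a b hab]
    simp
  rw [claim, mul_neg]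

lemma list_split {α : Type*} (l : List α) (p q : ℕ) (hpq : p < q) (hq : q < l.length) :
    l = l.take p ++ l[p] :: (((l.drop (p+1)).take (q-p-1)) ++ l[q] :: l.drop (q+1)) := by
  conv_lhs => rw [← List.take_append_drop p l]
  rw [List.drop_eq_getElem_cons (by omega)]
  congr 2
  conv_lhs => rw [← List.take_append_drop (q-p-1) (l.drop (p+1))]
  congr 1
  rw [List.drop_drop]
  have h1 : p + 1 + (q - p - 1) = q := by omega
  rw [h1, List.drop_eq_getElem_cons (by omega)]


lemma aux_swap (hsq : ∀ i, σ i * σ i = 1)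
    (hanti : ∀ i j : Fin n, i ≠ j → σ i * σ j = -(σ j * σ i))
    (f : Equiv.Perm (Fin n)) (p q : Fin n) (hpq : (p:ℕ) < (q:ℕ)) :
    ((List.ofFn (fun k => Equiv.swap (f p) (f q) (f k))).map σ).prod
      = - ((List.ofFn (fun k => f k)).map σ).prod := by
  set g : Fin n → Fin n := fun k => f k with hg
  set h : Fin n → Fin n := fun k => Equiv.swap (f p) (f q) (f k) with hh
  have hker : ∀ (k : Fin n), k ≠ p → k ≠ q → h k = g k := by
    intro k hkp hkq
    exact Equiv.swap_apply_of_ne_of_ne (f.injective.ne hkp) (f.injective.ne hkq)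
  have hhp : h p = g q := Equiv.swap_apply_left _ _
  have hhq : h q = g p := Equiv.swap_apply_right _ _
  set A := List.ofFn g with hA
  set B := List.ofFn h with hB
  have hAlen : A.length = n := List.length_ofFn (f := g)
  have hBlen : B.length = n := List.length_ofFn (f := h)
  have hqA : (q:ℕ) < A.length := by rw [hAlen]; exact q.isLt
  have hqB : (q:ℕ) < B.length := by rw [hBlen]; exact q.isLt
  have hApq : A[(p:ℕ)]'(by omega) = g p := by
    simp only [hA, List.getElem_ofFn, Fin.eta]
  have hAq : A[(q:ℕ)]'hqA = g q := by
    simp only [hA, List.getElem_ofFn, Fin.eta]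
  have hBp : B[(p:ℕ)]'(by omega) = g q := by
    simp only [hB, List.getElem_ofFn, Fin.eta]; exact hhp
  have hBq : B[(q:ℕ)]'hqB = g p := by
    simp only [hB, List.getElem_ofFn, Fin.eta]; exact hhq
  have htake : B.take (p:ℕ) = A.take (p:ℕ) := by
    apply List.ext_getElem
    · rw [List.length_take, List.length_take, hAlen, hBlen]
    · intro i h1 h2
      rw [List.length_take, hBlen] at h1
      have hi : i < n := lt_of_lt_of_le h1 (min_le_right _ _)
      have hip : i < (p:ℕ) := lt_of_lt_of_le h1 (min_le_left _ _)
      rw [List.getElem_take, List.getElem_take]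
      simp only [hA, hB, List.getElem_ofFn]
      exact hker _ (by simp [Fin.ext_iff]; omega) (by simp [Fin.ext_iff]; omega)
  have hmid : (B.drop ((p:ℕ)+1)).take ((q:ℕ)-(p:ℕ)-1) = (A.drop ((p:ℕ)+1)).take ((q:ℕ)-(p:ℕ)-1) := by
    apply List.ext_getElem
    · rw [List.length_take, List.length_take, List.length_drop, List.length_drop, hAlen, hBlen]
    · intro i h1 h2
      rw [List.length_take, List.length_drop, hBlen] at h1
      have hi : i < (q:ℕ)-(p:ℕ)-1 := lt_of_lt_of_le h1 (min_le_left _ _)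
      have hin : (p:ℕ)+1+i < n := by omega
      rw [List.getElem_take, List.getElem_take, List.getElem_drop, List.getElem_drop]
      simp only [hA, hB, List.getElem_ofFn]
      exact hker _ (by simp [Fin.ext_iff]; omega) (by simp [Fin.ext_iff]; omega)
  have hdrop : B.drop ((q:ℕ)+1) = A.drop ((q:ℕ)+1) := by
    apply List.ext_getElem
    · rw [List.length_drop, List.length_drop, hAlen, hBlen]
    · intro i h1 h2
      rw [List.length_drop, hBlen] at h1
      rw [List.getElem_drop, List.getElem_drop]
      simp only [hA, hB, List.getElem_ofFn]
      exact hker _ (by simp [Fin.ext_iff]; omega) (by simp [Fin.ext_iff]; omega)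
  have hgpmem : g p ∉ (A.drop ((p:ℕ)+1)).take ((q:ℕ)-(p:ℕ)-1) := by
    rw [List.mem_iff_getElem]
    rintro ⟨j, hj, hjeq⟩
    rw [List.length_take, List.length_drop, hAlen] at hj
    have hj1 : j < (q:ℕ)-(p:ℕ)-1 := lt_of_lt_of_le hj (min_le_left _ _)
    rw [List.getElem_take, List.getElem_drop] at hjeq
    simp only [hA, List.getElem_ofFn] at hjeq
    have := f.injective hjeq
    rw [Fin.ext_iff] at this
    simp at this; omega
  have hgqmem : g q ∉ (A.drop ((p:ℕ)+1)).take ((q:ℕ)-(p:ℕ)-1) := by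
    rw [List.mem_iff_getElem]
    rintro ⟨j, hj, hjeq⟩
    rw [List.length_take, List.length_drop, hAlen] at hj
    have hj1 : j < (q:ℕ)-(p:ℕ)-1 := lt_of_lt_of_le hj (min_le_left _ _)
    rw [List.getElem_take, List.getElem_drop] at hjeq
    simp only [hA, List.getElem_ofFn] at hjeq
    have := f.injective hjeq
    rw [Fin.ext_iff] at this
    simp at this; omega
  have hsplitA : A = A.take (p:ℕ) ++ g p ::
      (((A.drop ((p:ℕ)+1)).take ((q:ℕ)-(p:ℕ)-1)) ++ g q :: A.drop ((q:ℕ)+1)) := by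
    conv_lhs => rw [list_split A (p:ℕ) (q:ℕ) hpq hqA]
    rw [hApq, hAq]
  have hsplitB : B = A.take (p:ℕ) ++ g q ::
      (((A.drop ((p:ℕ)+1)).take ((q:ℕ)-(p:ℕ)-1)) ++ g p :: A.drop ((q:ℕ)+1)) := by
    conv_lhs => rw [list_split B (p:ℕ) (q:ℕ) hpq hqB]
    rw [hBp, hBq, htake, hmid, hdrop]
  have hne : g q ≠ g p := f.injective.ne (Fin.ne_of_val_ne (by omega))
  calc ((List.ofFn h).map σ).prod
      = ((A.take (p:ℕ) ++ g q ::
          (((A.drop ((p:ℕ)+1)).take ((q:ℕ)-(p:ℕ)-1)) ++ g p :: A.drop ((q:ℕ)+1))).map σ).prod := by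
        rw [← hsplitB]
    _ = - ((A.take (p:ℕ) ++ g p ::
          (((A.drop ((p:ℕ)+1)).take ((q:ℕ)-(p:ℕ)-1)) ++ g q :: A.drop ((q:ℕ)+1))).map σ).prod :=
        swap_word σ hsq hanti _ _ _ _ _ hne hgqmem hgpmem
    _ = - ((List.ofFn g).map σ).prod := by rw [← hsplitA]


lemma perm_word (hsq : ∀ i, σ i * σ i = 1)
    (hanti : ∀ i j : Fin n, i ≠ j → σ i * σ j = -(σ j * σ i))
    (π : Equiv.Perm (Fin n)) :
    ((List.ofFn (fun k => π k)).map σ).prod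
      = ((Equiv.Perm.sign π : ℤ) : ℂ) • ((List.ofFn (fun k : Fin n => k)).map σ).prod := by
  refine Equiv.Perm.swap_induction_on π ?_ ?_
  · simp
  · intro f x y hxy hf
    have hxy' : (f.symm x : ℕ) ≠ (f.symm y : ℕ) := by
      intro h
      exact hxy (by simpa using congrArg f (Fin.ext h : f.symm x = f.symm y))
    have hstep : ((List.ofFn (fun k => (Equiv.swap x y * f) k)).map σ).prod
        = - ((List.ofFn (fun k => f k)).map σ).prod := by
      simp only [Equiv.Perm.mul_apply]
      rcases lt_or_gt_of_ne hxy' with hlt | hgt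
      · have := aux_swap σ hsq hanti f (f.symm x) (f.symm y) hlt
        simpa only [Equiv.apply_symm_apply] using this
      · have := aux_swap σ hsq hanti f (f.symm y) (f.symm x) hgt
        rw [Equiv.apply_symm_apply, Equiv.apply_symm_apply, Equiv.swap_comm y x] at this
        exact this
    rw [hstep, hf]
    have hs : ((Equiv.Perm.sign (Equiv.swap x y * f) : ℤ) : ℂ)
        = -((Equiv.Perm.sign f : ℤ) : ℂ) := by
      rw [Equiv.Perm.sign_mul, Equiv.Perm.sign_swap hxy]
      push_cast
      ring
    rw [hs, neg_smul]

end CliffordAux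

/-- trace of a product of `n` Clifford contractions `σ·q_k` for a left-handed
Clifford family of odd size `n`. -/
theorem clifford_trace_det
    (n : ℕ) (hn : Odd n) (N : ℕ) (hN : N = 2 ^ ((n - 1) / 2))
    (σ : Fin n → Matrix (Fin N) (Fin N) ℂ)
    (hσsa : ∀ j, (σ j)ᴴ = σ j)
    (hσac : ∀ i j, σ i * σ j + σ j * σ i =
      if i = j then (2 : ℂ) • (1 : Matrix (Fin N) (Fin N) ℂ) else 0)
    (hσhand : (List.ofFn σ).prod = (Complex.I) ^ ((n - 1) / 2) • (1 : Matrix (Fin N) (Fin N) ℂ))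
    (q : Fin n → Fin n → ℝ) :
    Matrix.trace ((List.ofFn fun k : Fin n => ∑ i : Fin n, ((q k i : ℝ) : ℂ) • σ i).prod) =
      (2 : ℂ) ^ ((n - 1) / 2) * Complex.I ^ ((n - 1) / 2) *
        ((Matrix.det (Matrix.of fun i k : Fin n => q k i) : ℝ) : ℂ) := by
  classical
  have hsq := CliffordAux.sq_one σ hσac
  have hanti : ∀ i j : Fin n, i ≠ j → σ i * σ j = -(σ j * σ i) :=
    fun i j hij => CliffordAux.anti σ hσac hij
  have hNc : (N : ℂ) = (2:ℂ) ^ ((n - 1) / 2) := by rw [hN]; push_cast; ring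
  -- step 1 : expansion
  have expand : (List.ofFn fun k : Fin n => ∑ i : Fin n, ((q k i : ℝ) : ℂ) • σ i).prod
      = ∑ r : Fin n → Fin n, (∏ k : Fin n, ((q k (r k) : ℝ) : ℂ)) • ((List.ofFn r).map σ).prod := by
    calc (List.ofFn fun k : Fin n => ∑ i : Fin n, ((q k i : ℝ) : ℂ) • σ i).prod
        = (MultilinearMap.mkPiAlgebraFin ℂ n _)
            (fun k : Fin n => ∑ i : Fin n, ((q k i : ℝ) : ℂ) • σ i) :=
          (MultilinearMap.mkPiAlgebraFin_apply _).symm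
      _ = ∑ r : Fin n → Fin n, (MultilinearMap.mkPiAlgebraFin ℂ n _)
            (fun k : Fin n => ((q k (r k) : ℝ) : ℂ) • σ (r k)) :=
          MultilinearMap.map_sum _ _
      _ = ∑ r : Fin n → Fin n, (∏ k : Fin n, ((q k (r k) : ℝ) : ℂ)) • ((List.ofFn r).map σ).prod := by
          refine Finset.sum_congr rfl fun r _ => ?_
          rw [MultilinearMap.map_smul_univ, MultilinearMap.mkPiAlgebraFin_apply, List.map_ofFn]
          rfl
  rw [expand, Matrix.trace_sum]
  simp only [Matrix.trace_smul, smul_eq_mul]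
  -- step 2 : kill non-bijective terms
  have hzero : ∀ r : Fin n → Fin n, ¬ Function.Bijective r →
      (∏ k : Fin n, ((q k (r k) : ℝ) : ℂ)) * Matrix.trace (((List.ofFn r).map σ).prod) = 0 := by
    intro r hr
    have hinj : ¬ Function.Injective r := fun h => hr (Finite.injective_iff_bijective.mp h)
    have hnd : ¬ (List.ofFn r).Nodup := fun h => hinj (List.nodup_ofFn.mp h)
    have ht := CliffordAux.trace_short σ hsq hanti n (List.ofFn r)
      (by simp) (by simpa using hn) (by simp) (Or.inl hnd)
    rw [ht, mul_zero]
  have h1 : ∑ r : Fin n → Fin n,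
        (∏ k : Fin n, ((q k (r k) : ℝ) : ℂ)) * Matrix.trace (((List.ofFn r).map σ).prod)
      = ∑ r ∈ Finset.univ.filter Function.Bijective,
        (∏ k : Fin n, ((q k (r k) : ℝ) : ℂ)) * Matrix.trace (((List.ofFn r).map σ).prod) :=
    (Finset.sum_subset (Finset.filter_subset _ _)
      (fun r _ hr => hzero r (by simpa using hr))).symm
  have h2 : ∑ r ∈ Finset.univ.filter Function.Bijective,
        (∏ k : Fin n, ((q k (r k) : ℝ) : ℂ)) * Matrix.trace (((List.ofFn r).map σ).prod)
      = ∑ π : Equiv.Perm (Fin n),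
        (∏ k : Fin n, ((q k (π k) : ℝ) : ℂ)) * Matrix.trace (((List.ofFn (fun k => π k)).map σ).prod) := by
    refine Finset.sum_bij (fun r hr => Equiv.ofBijective r (Finset.mem_filter.mp hr).2)
      (fun _ _ => Finset.mem_univ _) ?_ ?_ ?_
    · intro r1 h1 r2 h2 he
      exact congrArg (fun (e : Equiv (Fin n) (Fin n)) => (e : Fin n → Fin n)) he
    · intro π _
      refine ⟨π, Finset.mem_filter.mpr ⟨Finset.mem_univ _, π.bijective⟩, ?_⟩
      exact Equiv.ext fun x => rfl
    · intro r hr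
      rfl
  rw [h1, h2]
  -- step 3 : evaluate each permutation term
  have hterm : ∀ π : Equiv.Perm (Fin n),
      Matrix.trace (((List.ofFn (fun k => π k)).map σ).prod)
        = ((Equiv.Perm.sign π : ℤ) : ℂ) * (Complex.I ^ ((n - 1) / 2) * (2:ℂ) ^ ((n - 1) / 2)) := by
    intro π
    rw [CliffordAux.perm_word σ hsq hanti π]
    have hid : ((List.ofFn (fun k : Fin n => k)).map σ).prod = (List.ofFn σ).prod := by
      rw [List.map_ofFn]
      rfl
    rw [Matrix.trace_smul, hid, hσhand, Matrix.trace_smul, Matrix.trace_one]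
    simp only [smul_eq_mul]
    rw [Fintype.card_fin, hNc]
  calc ∑ π : Equiv.Perm (Fin n),
        (∏ k : Fin n, ((q k (π k) : ℝ) : ℂ)) * Matrix.trace (((List.ofFn (fun k => π k)).map σ).prod)
      = (2:ℂ) ^ ((n - 1) / 2) * Complex.I ^ ((n - 1) / 2) *
          ∑ π : Equiv.Perm (Fin n), ((Equiv.Perm.sign π : ℤ) : ℂ) * ∏ k : Fin n, ((q k (π k) : ℝ) : ℂ) := by
        rw [Finset.mul_sum]
        refine Finset.sum_congr rfl fun π _ => ?_
        rw [hterm π]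
        ring
    _ = (2:ℂ) ^ ((n - 1) / 2) * Complex.I ^ ((n - 1) / 2) *
        ((Matrix.det (Matrix.of fun i k : Fin n => q k i) : ℝ) : ℂ) := by
      congr 1
      rw [Matrix.det_apply']
      push_cast
      refine Finset.sum_congr rfl fun π _ => ?_
      simp [Matrix.of_apply]
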